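/- Let f : U → V be a map in the set-up such that each connected component of V contains at most one critical point of f, and assume (∗∗). Let c be a critical point such that K_f(c) is a periodic component of K_f of period p. Then: (1) for every critical point c′ ∈ Forw(c) and every i ≥ 0, the component f^i(K_f(c′)) belongs to the cycle {K_f(c), f(K_f(c)), …, f^{p−1}(K_f(c))}; (2) every critical point in Forw(c) belongs to the class [c]; (3) c → c and c is persistently recurrent. -/

import Mathlib

open Set Function Topology

noncomputable section

/-- A (bounded) Jordan domain in the plane: a bounded connected open set whose
frontier is a Jordan curve, i.e. an injective continuous image of the circle. -/
def IsJordanDomain (Ω : Set ℂ) : Prop :=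
  IsOpen Ω ∧ IsConnected Ω ∧ Bornology.IsBounded Ω ∧
  ∃ g : Metric.sphere (0:ℂ) 1 → ℂ, Continuous g ∧ Function.Injective g ∧
    Set.range g = frontier Ω

/-- `A` is strictly contained in `X`: it is a proper subset of some connected
component of `X`. -/
def StrictlyContainedIn (A X : Set ℂ) : Prop :=
  ∃ x ∈ X, A ⊂ connectedComponentIn X x

/-- The set-up: `V ⊆ ℂ` is open with finitely many components, each a bounded Jordan
domain, with pairwise disjoint closures; `U` is open with closure contained in `V`,
with finitely many components with pairwise disjoint closures; `f : U → V` is proper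
holomorphic; every critical point of `f` lies in `K_f`. -/
structure Setup where
  U : Set ℂ
  V : Set ℂ
  f : ℂ → ℂ
  hV_open : IsOpen V
  hV_comp_finite : {C : Set ℂ | ∃ x ∈ V, C = connectedComponentIn V x}.Finite
  hV_jordan : ∀ x ∈ V, IsJordanDomain (connectedComponentIn V x)
  hV_disj : ∀ x ∈ V, ∀ y ∈ V, connectedComponentIn V x ≠ connectedComponentIn V y →
    closure (connectedComponentIn V x) ∩ closure (connectedComponentIn V y) = ∅
  hU_open : IsOpen U
  hUV : closure U ⊆ V
  hU_comp_finite : {C : Set ℂ | ∃ x ∈ U, C = connectedComponentIn U x}.Finite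
  hU_disj : ∀ x ∈ U, ∀ y ∈ U, connectedComponentIn U x ≠ connectedComponentIn U y →
    closure (connectedComponentIn U x) ∩ closure (connectedComponentIn U y) = ∅
  hf_maps : Set.MapsTo f U V
  hf_holo : DifferentiableOn ℂ f U
  hf_proper : ∀ K ⊆ V, IsCompact K → IsCompact (U ∩ f ⁻¹' K)
  hf_crit : ∀ z ∈ U, deriv f z = 0 → ∀ n : ℕ, f^[n] z ∈ U

namespace Setup

variable (S : Setup)

/-- `K_f = {z ∈ U : f^n(z) ∈ U for all n}`. -/
def K : Set ℂ := {z | z ∈ S.U ∧ ∀ n : ℕ, S.f^[n] z ∈ S.U}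

/-- The set of critical points of `f`. -/
def Crit : Set ℂ := {z | z ∈ S.U ∧ deriv S.f z = 0}

/-- `preV n = f^{-n}(V)`, preimages being taken for the partial map `f : U → V`. -/
def preV : ℕ → Set ℂ
  | 0 => S.V
  | n+1 => S.U ∩ S.f ⁻¹' (preV n)

/-- `P` is a puzzle piece of depth `n`: a connected component of `f^{-n}(V)`. -/
def IsPieceOfDepth (n : ℕ) (P : Set ℂ) : Prop :=
  ∃ x ∈ S.preV n, P = connectedComponentIn (S.preV n) x

/-- `P` is a puzzle piece. -/
def IsPiece (P : Set ℂ) : Prop := ∃ n, S.IsPieceOfDepth n P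

/-- `piece n x = P_n(x)`, the puzzle piece of depth `n` containing `x`. -/
def piece (n : ℕ) (x : ℂ) : Set ℂ := connectedComponentIn (S.preV n) x

/-- `X` is a finite union of puzzle pieces. -/
def IsPieceUnion (X : Set ℂ) : Prop :=
  ∃ P : Set (Set ℂ), P.Finite ∧ (∀ Q ∈ P, S.IsPiece Q) ∧ X = ⋃₀ P

/-- `X` is nice: for every connected component `P` of `X` and every `n ≥ 1`,
`f^n(P)` is not strictly contained in `X`. -/
def Nice (X : Set ℂ) : Prop :=
  ∀ x ∈ X, ∀ n : ℕ, 1 ≤ n →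
    ¬ StrictlyContainedIn (S.f^[n] '' connectedComponentIn X x) X

/-- `preIm X n = f^{-n}(X)`, preimages being taken for the partial map `f : U → V`. -/
def preIm (X : Set ℂ) : ℕ → Set ℂ
  | 0 => X
  | n+1 => S.U ∩ S.f ⁻¹' (preIm X n)

/-- `D(X) = ⋃_{k ≥ 0} f^{-k}(X)`. -/
def D (X : Set ℂ) : Set ℂ := ⋃ k, S.preIm X k

/-- For `z ∈ D(X) ∖ X`, `k` is the landing time `k(z)`: the minimal positive
integer with `f^k(z) ∈ X`. -/
def IsLandingTime (X : Set ℂ) (z : ℂ) (k : ℕ) : Prop :=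
  1 ≤ k ∧ S.f^[k] z ∈ X ∧ ∀ j, 1 ≤ j → j < k → S.f^[j] z ∉ X

/-- `landComp X z k = Comp_z(f^{-k}(Comp_{f^k(z)}(X)))`; for `k = k(z)` this is
`L_z(X)`. -/
def landComp (X : Set ℂ) (z : ℂ) (k : ℕ) : Set ℂ :=
  connectedComponentIn (S.preIm (connectedComponentIn X (S.f^[k] z)) k) z

/-- `x` combinatorially accumulates to `y`: for every `n ≥ 0` there is `j ≥ 1`
with `f^j(x) ∈ P_n(y)`. -/
def Acc (x y : ℂ) : Prop := ∀ n : ℕ, ∃ j : ℕ, 1 ≤ j ∧ S.f^[j] x ∈ S.piece n y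

/-- `Forw(x) = {y ∈ K_f : x → y}`. -/
def Forw (x : ℂ) : Set ℂ := {y | y ∈ S.K ∧ S.Acc x y}

/-- The equivalence `c1 ∼ c2` on critical points. -/
def Equiv (c1 c2 : ℂ) : Prop := c1 = c2 ∨ (S.Acc c1 c2 ∧ S.Acc c2 c1)

/-- The class `[c]` of a critical point `c`. -/
def cls (c : ℂ) : Set ℂ := {c' | c' ∈ S.Crit ∧ S.Equiv c c'}

/-- `D(f) = Crit(f)/∼`, the set of equivalence classes. -/
def classes : Set (Set ℂ) := {A | ∃ c ∈ S.Crit, A = S.cls c}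

/-- `[c1] → [c2]`. -/
def ClassAcc (A B : Set ℂ) : Prop := ∃ c1 ∈ A, ∃ c2 ∈ B, S.Acc c1 c2

/-- The partial order on classes: `A ≤ B` iff `A = B` or `B → A`. -/
def ClassLe (A B : Set ℂ) : Prop := A = B ∨ S.ClassAcc B A

/-- The minimal elements of a family of classes w.r.t. `ClassLe`. -/
def minimalsIn (T : Set (Set ℂ)) : Set (Set ℂ) :=
  {A | A ∈ T ∧ ∀ B ∈ T, S.ClassLe B A → B = A}

/-- Auxiliary: `(D_k(f), D_0(f) ∪ ⋯ ∪ D_k(f))`. -/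
def DlevelAux : ℕ → Set (Set ℂ) × Set (Set ℂ)
  | 0 => (S.minimalsIn S.classes, S.minimalsIn S.classes)
  | k+1 =>
      (S.minimalsIn (S.classes \ (DlevelAux k).2),
        (DlevelAux k).2 ∪ S.minimalsIn (S.classes \ (DlevelAux k).2))

/-- `Dlevel k = D_k(f)`. -/
def Dlevel (k : ℕ) : Set (Set ℂ) := (S.DlevelAux k).1

/-- Each connected component of `V` contains at most one critical point. -/
def OneCritPerComp : Prop :=
  ∀ c ∈ S.Crit, ∀ c' ∈ S.Crit,
    connectedComponentIn S.V c = connectedComponentIn S.V c' → c = c'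

/-- Assumption (∗∗): if `c` does not combinatorially accumulate to `c'`, then
`f^j(c) ∉ P_0(c')` for all `j ≥ 1`. -/
def StarStar : Prop :=
  ∀ c ∈ S.Crit, ∀ c' ∈ S.Crit, ¬ S.Acc c c' →
    ∀ j : ℕ, 1 ≤ j → S.f^[j] c ∉ S.piece 0 c'

/-- `K_f(x)`, the connected component of `K_f` containing `x`. -/
def Kcomp (x : ℂ) : Set ℂ := connectedComponentIn S.K x

/-- `P_{n+k}(c1)` is a child of `P_n(c2)`: `f^k(P_{n+k}(c1)) = P_n(c2)` and
`f^{k-1}` maps `P_{n+k-1}(f(c1))` conformally onto `P_n(c2)`. -/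
def IsChild (c1 : ℂ) (k : ℕ) (n : ℕ) (c2 : ℂ) : Prop :=
  1 ≤ k ∧ S.f^[k] '' S.piece (n+k) c1 = S.piece n c2 ∧
  Set.InjOn (S.f^[k-1]) (S.piece (n+k-1) (S.f c1)) ∧
  S.f^[k-1] '' S.piece (n+k-1) (S.f c1) = S.piece n c2

/-- `c` is persistently recurrent: for every `n ≥ 0` and every `c' ∈ [c]`,
`P_n(c')` has only finitely many children. -/
def PersistentlyRecurrent (c : ℂ) : Prop :=
  ∀ n : ℕ, ∀ c' ∈ S.cls c,
    {Q : Set ℂ | ∃ c1 ∈ S.cls c, ∃ k : ℕ, S.IsChild c1 k n c' ∧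
      Q = S.piece (n+k) c1}.Finite

/-- `Crit_n(f)`. -/
def CritN : Set ℂ := {c | c ∈ S.Crit ∧ ∀ c' ∈ S.Crit, ¬ S.Acc c c'}

/-- `Crit_e(f)`. -/
def CritE : Set ℂ := {c | c ∈ S.Crit ∧ ¬ S.Acc c c ∧ ∃ c' ∈ S.Crit, S.Acc c c'}

/-- `Crit_r(f)`. -/
def CritR : Set ℂ := {c | c ∈ S.Crit ∧ S.Acc c c ∧ ¬ S.PersistentlyRecurrent c}

/-- `Crit_p(f)`. -/
def CritP : Set ℂ := {c | c ∈ S.Crit ∧ S.Acc c c ∧ S.PersistentlyRecurrent c}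

end Setup

/-! ### Auxiliary general topology lemmas -/

section TopAux

open Filter

lemma auxExistsSubsetOfIsOpen {E : ℕ → Set ℂ} (hd : ∀ n, E (n+1) ⊆ E n)
    (hc : ∀ n, IsCompact (E n)) {w : Set ℂ} (hw : IsOpen w) (hsub : (⋂ n, E n) ⊆ w) :
    ∃ N, E N ⊆ w := by
  by_contra h
  push_neg at h
  have hne : ∀ n, (E n \ w).Nonempty := fun n => Set.diff_nonempty.2 (h n)
  have hcomp : ∀ n, IsCompact (E n \ w) := fun n => ((hc n).diff hw)
  have hd' : ∀ n, E (n+1) \ w ⊆ E n \ w := fun n => Set.diff_subset_diff_left (hd n)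
  obtain ⟨z, hz⟩ := IsCompact.nonempty_iInter_of_sequence_nonempty_isCompact_isClosed
    (fun n => E n \ w) hd' hne (hcomp 0) (fun n => (hcomp n).isClosed)
  simp only [Set.mem_iInter, Set.mem_diff] at hz
  exact (hz 0).2 (hsub (Set.mem_iInter.2 fun n => (hz n).1))

lemma auxIsPreconnectedIInter {E : ℕ → Set ℂ} (hd : ∀ n, E (n+1) ⊆ E n)
    (hc : ∀ n, IsCompact (E n)) (hconn : ∀ n, IsPreconnected (E n)) :
    IsPreconnected (⋂ n, E n) := by
  set A := ⋂ n, E n with hA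
  have hanti : Antitone E := antitone_nat_of_succ_le hd
  have hAsub : ∀ n, A ⊆ E n := fun n => Set.iInter_subset _ _
  have hAclosed : IsClosed A := isClosed_iInter fun n => (hc n).isClosed
  intro u v hu hv hcover ⟨a, ha⟩ ⟨b, hb⟩
  by_contra hemp
  rw [Set.not_nonempty_iff_eq_empty] at hemp
  -- A ∩ u and A ∩ v are compact and disjoint
  have huv : ∀ x ∈ A, x ∈ u → x ∉ v := by
    intro x hx hxu hxv
    exact absurd hemp (Set.nonempty_iff_ne_empty.1 ⟨x, hx, hxu, hxv⟩)
  have h1 : A ∩ u = A ∩ vᶜ := by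
    apply Set.Subset.antisymm
    · rintro x ⟨hx, hxu⟩; exact ⟨hx, huv x hx hxu⟩
    · rintro x ⟨hx, hxv⟩
      rcases hcover hx with h | h
      · exact ⟨hx, h⟩
      · exact absurd h hxv
  have h2 : A ∩ v = A ∩ uᶜ := by
    apply Set.Subset.antisymm
    · rintro x ⟨hx, hxv⟩
      refine ⟨hx, fun hxu => huv x hx hxu hxv⟩
    · rintro x ⟨hx, hxu⟩
      rcases hcover hx with h | h
      · exact absurd h hxu
      · exact ⟨hx, h⟩
  have hcA : IsCompact A := (hc 0).of_isClosed_subset hAclosed (hAsub 0)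
  have hc1 : IsCompact (A ∩ u) := by
    rw [h1]; exact hcA.inter_right hv.isClosed_compl
  have hc2 : IsCompact (A ∩ v) := by
    rw [h2]; exact hcA.inter_right hu.isClosed_compl
  have hdisj : Disjoint (A ∩ u) (A ∩ v) := by
    rw [Set.disjoint_iff_inter_eq_empty]
    ext x
    simp only [Set.mem_inter_iff, Set.mem_empty_iff_false, iff_false]
    rintro ⟨⟨hx, hxu⟩, ⟨-, hxv⟩⟩
    exact huv x hx hxu hxv
  obtain ⟨u', v', hu', hv', hsu, hsv, hdisj'⟩ :=
    SeparatedNhds.of_isCompact_isCompact hc1 hc2 hdisj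
  have hAcov : A ⊆ u' ∪ v' := by
    intro x hx
    rcases hcover hx with h | h
    · exact Or.inl (hsu ⟨hx, h⟩)
    · exact Or.inr (hsv ⟨hx, h⟩)
  obtain ⟨N, hN⟩ := auxExistsSubsetOfIsOpen hd hc (hu'.union hv') hAcov
  obtain ⟨z, hz1, hz2⟩ := hconn N u' v' hu' hv' hN
    ⟨a, hAsub N ha.1, hsu ⟨ha.1, ha.2⟩⟩ ⟨b, hAsub N hb.1, hsv ⟨hb.1, hb.2⟩⟩
  exact Set.disjoint_iff.1 hdisj' hz2 |>.elim

lemma auxImageIInter {g : ℂ → ℂ} {E : ℕ → Set ℂ}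
    (hd : ∀ n, E (n+1) ⊆ E n) (hc : ∀ n, IsCompact (E n))
    (hcont : ContinuousOn g (E 0)) :
    g '' (⋂ n, E n) = ⋂ n, g '' E n := by
  have hanti : Antitone E := antitone_nat_of_succ_le hd
  apply Set.Subset.antisymm
  · intro y hy
    obtain ⟨x, hx, rfl⟩ := hy
    exact Set.mem_iInter.2 fun n => ⟨x, Set.mem_iInter.1 hx n, rfl⟩
  · intro y hy
    have hyn : ∀ n, ∃ x ∈ E n, g x = y := by
      intro n
      obtain ⟨x, hx, hxy⟩ := Set.mem_iInter.1 hy n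
      exact ⟨x, hx, hxy⟩
    set F := fun n => {x ∈ E n | g x = y} with hF
    have hFc : ∀ n, IsClosed (F n) := by
      intro n
      have : F n = E n ∩ g ⁻¹' {y} := by
        ext x; simp [hF]
      rw [this]
      exact (hcont.mono (hanti (Nat.zero_le n))).preimage_isClosed_of_isClosed
        (hc n).isClosed isClosed_singleton
    have hFcomp : ∀ n, IsCompact (F n) := fun n =>
      (hc n).of_isClosed_subset (hFc n) (fun x hx => hx.1)
    obtain ⟨x, hx⟩ := IsCompact.nonempty_iInter_of_sequence_nonempty_isCompact_isClosed
      F (fun n => fun x hx => ⟨hd n hx.1, hx.2⟩)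
      (fun n => by obtain ⟨x, hx, hxy⟩ := hyn n; exact ⟨x, hx, hxy⟩)
      (hFcomp 0) hFc
    simp only [Set.mem_iInter] at hx
    exact ⟨x, Set.mem_iInter.2 fun n => (hx n).1, (hx 0).2⟩

lemma auxMemConnCompOfClosure {s : Set ℂ} (hs : IsOpen s) {x w : ℂ}
    (hw1 : w ∈ closure (connectedComponentIn s x)) (hw2 : w ∈ s) :
    w ∈ connectedComponentIn s x := by
  have hto : IsOpen (connectedComponentIn s w) := hs.connectedComponentIn
  have hmem : w ∈ connectedComponentIn s w := mem_connectedComponentIn hw2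
  obtain ⟨y, hy1, hy2⟩ := mem_closure_iff.1 hw1 _ hto hmem
  have e1 : connectedComponentIn s w = connectedComponentIn s y :=
    connectedComponentIn_eq hy1
  have e2 : connectedComponentIn s x = connectedComponentIn s y :=
    connectedComponentIn_eq hy2
  rw [e2, ← e1]
  exact hmem

/-- A holomorphic map is not injective near a critical point. -/
lemma auxCritNotInjOn {f : ℂ → ℂ} {c : ℂ} {B : Set ℂ} (hB : B ∈ 𝓝 c)
    (hf : AnalyticAt ℂ f c) (hnc : ¬ ∀ᶠ z in 𝓝 c, f z = f c)
    (hd : deriv f c = 0) : ¬ Set.InjOn f B := by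
  intro hinj
  set g : ℂ → ℂ := fun z => f z - f c with hg
  have hga : AnalyticAt ℂ g c := hf.sub analyticAt_const
  have hgnt : analyticOrderAt g c ≠ ⊤ := by
    intro htop
    apply hnc
    filter_upwards [analyticOrderAt_eq_top.1 htop] with z hz
    exact sub_eq_zero.1 hz
  obtain ⟨d, hdord⟩ : ∃ d : ℕ, analyticOrderAt g c = (d : ℕ∞) := by
    lift analyticOrderAt g c to ℕ using hgnt with d hdd
    exact ⟨d, rfl⟩
  obtain ⟨h, hha, hh0, hev⟩ := hga.analyticOrderAt_eq_natCast.1 hdord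
  have hev' : ∀ᶠ z in 𝓝 c, g z = (z - c) ^ d * h z := by
    filter_upwards [hev] with z hz
    simpa [smul_eq_mul] using hz
  have hgc : g c = 0 := by simp [hg]
  have hself := hev'.self_of_nhds
  have hd0 : d ≠ 0 := by
    intro h0
    rw [hgc, h0, pow_zero, one_mul] at hself
    exact hh0 hself.symm
  have hd1 : d ≠ 1 := by
    intro h1
    have hF1 : HasDerivAt (fun z => (z - c)^d * h z) (h c) c := by
      have h1' : HasDerivAt (fun z : ℂ => (z - c)^d) 1 c := by
        rw [h1]
        simpa [pow_one] using ((hasDerivAt_id c).sub_const c)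
      have h2' : HasDerivAt h (deriv h c) c := hha.differentiableAt.hasDerivAt
      have hm := h1'.fun_mul h2'
      simpa [h1, pow_one, sub_self] using hm
    have hderg : deriv g c = 0 := by
      rw [hg]
      simp only [deriv_sub_const, hd]
    have hgh : deriv g c = h c := by
      have heq : g =ᶠ[𝓝 c] (fun z => (z - c)^d * h z) := hev'
      rw [heq.deriv_eq, hF1.deriv]
    rw [hderg] at hgh
    exact hh0 hgh.symm
  have hd2 : 2 ≤ d := by omega
  have hdC : (d : ℂ) ≠ 0 := Nat.cast_ne_zero.2 (by omega)
  set u : ℂ := h c with hu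
  have hune : u ≠ 0 := hh0
  set w : ℂ := Complex.exp (Complex.log u / d) with hw
  have hwd : w ^ d = u := by
    rw [hw, ← Complex.exp_nat_mul]
    have e1 : (d:ℂ) * (Complex.log u / d) = Complex.log u := by field_simp
    rw [e1, Complex.exp_log hune]
  have hwne : w ≠ 0 := Complex.exp_ne_zero _
  set φ : ℂ → ℂ := fun z => Complex.exp (Complex.log (h z / u) / d) * w with hφdef
  have hφa : AnalyticAt ℂ φ c := by
    have a1 : AnalyticAt ℂ (fun z => h z / u) c := hha.div analyticAt_const hune
    have hm : (h c / u) ∈ Complex.slitPlane := by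
      rw [← hu, div_self hune]
      exact Complex.one_mem_slitPlane
    have a2 : AnalyticAt ℂ (fun z => Complex.log (h z / u)) c := by
      have hcomp := AnalyticAt.comp (g := Complex.log) (f := fun z => h z / u)
        (by exact analyticAt_clog hm) a1
      exact hcomp
    have a3 : AnalyticAt ℂ (fun z => Complex.log (h z / u) / (d:ℂ)) c :=
      a2.div analyticAt_const hdC
    have a4 : AnalyticAt ℂ (fun z => Complex.exp (Complex.log (h z / u) / d)) c := by
      have hcomp := AnalyticAt.comp (g := Complex.exp)
        (f := fun z => Complex.log (h z / u) / (d:ℂ)) analyticAt_cexp a3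
      exact hcomp
    exact a4.mul analyticAt_const
  have hφc : φ c = w := by
    rw [hφdef]
    simp only [← hu, div_self hune, Complex.log_one, zero_div, Complex.exp_zero, one_mul]
  have hhne : ∀ᶠ z in 𝓝 c, h z ≠ 0 := hha.continuousAt.eventually_ne hh0
  have hφd : ∀ᶠ z in 𝓝 c, φ z ^ d = h z := by
    filter_upwards [hhne] with z hz
    rw [hφdef]
    simp only []
    have e1 : (d:ℂ) * (Complex.log (h z / u) / d) = Complex.log (h z / u) := by field_simp
    rw [mul_pow, ← Complex.exp_nat_mul, e1, Complex.exp_log (div_ne_zero hz hune), hwd,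
      div_mul_cancel₀ _ hune]
  set F : ℂ → ℂ := fun z => (z - c) * φ z with hF
  have hFa : AnalyticAt ℂ F c := (analyticAt_id.sub analyticAt_const).mul hφa
  have hFc : F c = 0 := by
    rw [hF]; simp
  have hFder : HasDerivAt F w c := by
    have h1' : HasDerivAt (fun z : ℂ => z - c) 1 c := (hasDerivAt_id c).sub_const c
    have h2' : HasDerivAt φ (deriv φ c) c := hφa.differentiableAt.hasDerivAt
    have hm := h1'.fun_mul h2'
    simpa [hφc, sub_self] using hm
  have hFnc : ¬ ∀ᶠ z in 𝓝 c, F z = F c := by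
    intro hconst
    have hd0' : deriv F c = 0 := by
      have he : deriv F c = deriv (fun _ => F c) c :=
        Filter.EventuallyEq.deriv_eq hconst
      simpa using he
    rw [hFder.deriv] at hd0'
    exact hwne hd0'
  have hmap : 𝓝 (0:ℂ) ≤ Filter.map F (𝓝 c) := by
    have hm := hFa.eventually_constant_or_nhds_le_map_nhds.resolve_left hFnc
    rwa [hFc] at hm
  have hgF : ∀ᶠ z in 𝓝 c, f z - f c = F z ^ d := by
    filter_upwards [hev', hφd] with z h1 h2
    rw [hF]
    simp only []
    rw [mul_pow, h2]
    exact h1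
  have hs : {z | z ∈ B ∧ f z - f c = F z ^ d} ∈ 𝓝 c := by
    have := Filter.inter_mem hB hgF
    exact this
  obtain ⟨ε, hε, hball⟩ := Metric.mem_nhds_iff.1 (hmap (Filter.image_mem_map hs))
  set ω : ℂ := Complex.exp (((2 * Real.pi / d : ℝ) : ℂ) * Complex.I) with hω
  have hωd : ω ^ d = 1 := by
    rw [hω, ← Complex.exp_nat_mul]
    have e1 : (d:ℂ) * (((2 * Real.pi / d : ℝ) : ℂ) * Complex.I)
        = 2 * (Real.pi : ℂ) * Complex.I := by
      push_cast
      field_simp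
    rw [e1]
    exact Complex.exp_two_pi_mul_I
  have hω1 : ω ≠ 1 := by
    intro hcontra
    rw [hω, Complex.exp_eq_one_iff] at hcontra
    obtain ⟨n, hn⟩ := hcontra
    have h2 : ((2 * Real.pi / d : ℝ) : ℂ) = (n : ℂ) * (2 * (Real.pi:ℂ)) := by
      have h3 : ((2 * Real.pi / d : ℝ) : ℂ) * Complex.I
          = ((n:ℂ) * (2 * (Real.pi:ℂ))) * Complex.I := by
        rw [hn]; ring
      exact mul_right_cancel₀ Complex.I_ne_zero h3
    have h4 : (2 * Real.pi / d : ℝ) = (n : ℝ) * (2 * Real.pi) := by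
      exact_mod_cast h2
    have hdR : (2:ℝ) ≤ (d:ℝ) := by exact_mod_cast hd2
    have hπ := Real.pi_pos
    have hdR0 : (d:ℝ) ≠ 0 := by positivity
    rw [div_eq_iff hdR0] at h4
    rcases le_or_gt (n:ℝ) 0 with hn0 | hn0
    · have hint : 0 ≤ (2 * Real.pi * (d:ℝ)) * (-(n:ℝ)) :=
        mul_nonneg (by positivity) (by linarith)
      nlinarith
    · have hn1 : (1:ℤ) ≤ n := by
        have : (0:ℤ) < n := by exact_mod_cast hn0
        omega
      have hn1' : (1:ℝ) ≤ (n:ℝ) := by exact_mod_cast hn1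
      have hint1 : 0 ≤ ((n:ℝ) - 1) * (2 * Real.pi * (d:ℝ)) :=
        mul_nonneg (by linarith) (by positivity)
      have hint2 : 0 ≤ ((d:ℝ) - 2) * (2 * Real.pi) :=
        mul_nonneg (by linarith) (by positivity)
      nlinarith
  set ζ : ℂ := ((ε/2 : ℝ) : ℂ) with hζ
  have hζ0 : ζ ≠ 0 := by
    rw [hζ]
    exact_mod_cast (by positivity : (ε/2 : ℝ) ≠ 0)
  have hζball : ζ ∈ Metric.ball (0:ℂ) ε := by
    rw [Metric.mem_ball, dist_zero_right, hζ, Complex.norm_real, Real.norm_eq_abs,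
      abs_of_pos (by positivity)]
    linarith
  have hωnorm : ‖ω‖ = 1 := by
    rw [hω, Complex.norm_exp]
    simp
  have hωζball : ω * ζ ∈ Metric.ball (0:ℂ) ε := by
    rw [Metric.mem_ball, dist_zero_right, norm_mul, hωnorm, one_mul, hζ,
      Complex.norm_real, Real.norm_eq_abs, abs_of_pos (by positivity)]
    linarith
  obtain ⟨a, ha, hFa'⟩ := hball hζball
  obtain ⟨b, hb, hFb'⟩ := hball hωζball
  have hab : a ≠ b := by
    intro he
    have hζω : ζ = ω * ζ := by
      conv_lhs => rw [← hFa']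
      rw [he]
      exact hFb'
    have : ω * ζ = 1 * ζ := by rw [one_mul]; exact hζω.symm
    exact hω1 (mul_right_cancel₀ hζ0 this)
  have hfab : f a = f b := by
    have e1 : f a - f c = ζ ^ d := by rw [← hFa']; exact ha.2
    have e2 : f b - f c = (ω*ζ) ^ d := by rw [← hFb']; exact hb.2
    have e3 : (ω*ζ)^d = ζ^d := by rw [mul_pow, hωd, one_mul]
    have e4 : f a - f c = f b - f c := by rw [e1, e2, e3]
    exact sub_left_inj.1 e4
  exact hab (hinj ha.1 hb.1 hfab)

end TopAux

namespace Setup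

variable (S : Setup)

lemma hUsubV : S.U ⊆ S.V := fun x hx => S.hUV (subset_closure hx)

lemma V_bounded : Bornology.IsBounded S.V := by
  have h : S.V ⊆ ⋃ C ∈ {C : Set ℂ | ∃ x ∈ S.V, C = connectedComponentIn S.V x}, C := by
    intro x hx
    exact Set.mem_biUnion ⟨x, hx, rfl⟩ (mem_connectedComponentIn hx)
  refine ((Bornology.isBounded_biUnion S.hV_comp_finite).2 ?_).subset h
  rintro C ⟨x, hx, rfl⟩
  exact (S.hV_jordan x hx).2.2.1

lemma closureU_compact : IsCompact (closure S.U) :=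
  (S.V_bounded.subset S.hUsubV).isCompact_closure

lemma fc : ContinuousOn S.f S.U := S.hf_holo.continuousOn

lemma fan : AnalyticOnNhd ℂ S.f S.U := S.hf_holo.analyticOnNhd S.hU_open

lemma preV_succ (n : ℕ) : S.preV (n+1) = S.U ∩ S.f ⁻¹' (S.preV n) := rfl

lemma preV_subset_V : ∀ n, S.preV n ⊆ S.V := by
  intro n
  cases n with
  | zero => exact subset_rfl
  | succ m => exact fun x hx => S.hUsubV hx.1

lemma preV_succ_subset_U (n : ℕ) : S.preV (n+1) ⊆ S.U := Set.inter_subset_left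

lemma preV_antitone_succ : ∀ n, S.preV (n+1) ⊆ S.preV n := by
  intro n
  induction n with
  | zero => exact fun x hx => S.hUsubV hx.1
  | succ m ih =>
      rintro x ⟨hxU, hxf⟩
      exact ⟨hxU, ih hxf⟩

lemma preV_antitone : Antitone S.preV := antitone_nat_of_succ_le S.preV_antitone_succ

lemma preV_open : ∀ n, IsOpen (S.preV n) := by
  intro n
  induction n with
  | zero => exact S.hV_open
  | succ m ih => exact S.fc.isOpen_inter_preimage S.hU_open ih

lemma closure_preV_spec : ∀ n, IsCompact (closure (S.preV (n+1))) ∧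
    closure (S.preV (n+1)) ⊆ S.preV n := by
  intro n
  induction n with
  | zero =>
      constructor
      · exact S.closureU_compact.of_isClosed_subset isClosed_closure
          (closure_mono (S.preV_succ_subset_U 0))
      · exact (closure_mono (S.preV_succ_subset_U 0)).trans S.hUV
  | succ m ih =>
      have hK : IsCompact (closure (S.preV (m+1))) := ih.1
      have hKV : closure (S.preV (m+1)) ⊆ S.V := ih.2.trans (S.preV_subset_V m)
      have hT : IsCompact (S.U ∩ S.f ⁻¹' (closure (S.preV (m+1)))) :=
        S.hf_proper _ hKV hK
      have hsub : S.preV (m+2) ⊆ S.U ∩ S.f ⁻¹' (closure (S.preV (m+1))) := by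
        rintro x ⟨hxU, hxf⟩
        exact ⟨hxU, subset_closure hxf⟩
      have hcl : closure (S.preV (m+2)) ⊆ S.U ∩ S.f ⁻¹' (closure (S.preV (m+1))) :=
        closure_minimal hsub hT.isClosed
      constructor
      · exact hT.of_isClosed_subset isClosed_closure hcl
      · intro x hx
        obtain ⟨hxU, hxf⟩ := hcl hx
        exact ⟨hxU, ih.2 hxf⟩

lemma K_mem_iff {z : ℂ} : z ∈ S.K ↔ z ∈ S.U ∧ ∀ n : ℕ, S.f^[n] z ∈ S.U := Iff.rfl

lemma K_fwd {z : ℂ} (hz : z ∈ S.K) (j : ℕ) : S.f^[j] z ∈ S.K := by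
  refine ⟨hz.2 j, fun n => ?_⟩
  rw [← Function.iterate_add_apply]
  exact hz.2 (n + j)

lemma crit_mem_K {c : ℂ} (hc : c ∈ S.Crit) : c ∈ S.K :=
  ⟨hc.1, S.hf_crit c hc.1 hc.2⟩

lemma K_subset_preV : ∀ n, S.K ⊆ S.preV n := by
  intro n
  induction n with
  | zero => exact fun z hz => S.hUsubV hz.1
  | succ m ih =>
      intro z hz
      refine ⟨hz.1, ih ?_⟩
      have := S.K_fwd hz 1
      rwa [Function.iterate_one] at this

lemma mem_K_of_forall_preV {z : ℂ} (hz : ∀ n, z ∈ S.preV n) : z ∈ S.K := by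
  have key : ∀ n, ∀ w, w ∈ S.preV (n+1) → S.f^[n] w ∈ S.U := by
    intro n
    induction n with
    | zero => exact fun w hw => hw.1
    | succ m ih =>
        intro w hw
        rw [Function.iterate_succ_apply]
        exact ih _ hw.2
  exact ⟨(hz 1).1, fun n => key n z (hz (n+1))⟩

lemma piece_subset (n : ℕ) (x : ℂ) : S.piece n x ⊆ S.preV n :=
  connectedComponentIn_subset _ _

lemma piece_open (n : ℕ) (x : ℂ) : IsOpen (S.piece n x) :=
  (S.preV_open n).connectedComponentIn

lemma mem_piece {n : ℕ} {x : ℂ} (hx : x ∈ S.preV n) : x ∈ S.piece n x :=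
  mem_connectedComponentIn hx

lemma piece_preconnected (n : ℕ) (x : ℂ) : IsPreconnected (S.piece n x) :=
  isPreconnected_connectedComponentIn

lemma piece_mono {m n : ℕ} (h : n ≤ m) (x : ℂ) : S.piece m x ⊆ S.piece n x :=
  connectedComponentIn_mono x (S.preV_antitone h)

lemma closure_piece_compact (n : ℕ) (x : ℂ) : IsCompact (closure (S.piece (n+1) x)) :=
  (S.closure_preV_spec n).1.of_isClosed_subset isClosed_closure
    (closure_mono (S.piece_subset _ _))

lemma closure_piece_subset {n : ℕ} {x : ℂ} (hx : x ∈ S.preV (n+1)) :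
    closure (S.piece (n+1) x) ⊆ S.piece n x := by
  have h1 : closure (S.piece (n+1) x) ⊆ S.preV n :=
    (closure_mono (S.piece_subset _ _)).trans (S.closure_preV_spec n).2
  have h2 : IsPreconnected (closure (S.piece (n+1) x)) :=
    (S.piece_preconnected (n+1) x).closure
  exact h2.subset_connectedComponentIn (subset_closure (S.mem_piece hx)) h1

lemma Kcomp_eq_iInter_piece {z : ℂ} (hz : z ∈ S.K) : S.Kcomp z = ⋂ n, S.piece n z := by
  set E := fun n => closure (S.piece (n+1) z) with hE
  have hzn : ∀ n, z ∈ S.preV n := fun n => S.K_subset_preV n hz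
  have hd : ∀ n, E (n+1) ⊆ E n :=
    fun n => (S.closure_piece_subset (hzn (n+2))).trans subset_closure
  have hEc : ∀ n, IsCompact (E n) := fun n => S.closure_piece_compact n z
  have hEconn : ∀ n, IsPreconnected (E n) := fun n => (S.piece_preconnected _ _).closure
  have hiE : (⋂ n, E n) = ⋂ n, S.piece n z := by
    apply Set.Subset.antisymm
    · intro x hx
      refine Set.mem_iInter.2 fun n => ?_
      exact S.closure_piece_subset (hzn (n+1)) (Set.mem_iInter.1 hx n)
    · intro x hx
      exact Set.mem_iInter.2 fun n => subset_closure (Set.mem_iInter.1 hx (n+1))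
  have hconn : IsPreconnected (⋂ n, S.piece n z) := by
    rw [← hiE]; exact auxIsPreconnectedIInter hd hEc hEconn
  have hsubK : (⋂ n, S.piece n z) ⊆ S.K := by
    intro x hx
    exact S.mem_K_of_forall_preV fun n => S.piece_subset n z (Set.mem_iInter.1 hx n)
  have hmemz : z ∈ ⋂ n, S.piece n z := Set.mem_iInter.2 fun n => S.mem_piece (hzn n)
  apply Set.Subset.antisymm
  · have h1 : S.Kcomp z ⊆ S.K := connectedComponentIn_subset _ _
    have h2 : IsPreconnected (S.Kcomp z) := isPreconnected_connectedComponentIn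
    refine Set.subset_iInter fun n => ?_
    exact h2.subset_connectedComponentIn (mem_connectedComponentIn hz)
      (h1.trans (S.K_subset_preV n))
  · exact hconn.subset_connectedComponentIn hmemz hsubK

lemma Kcomp_subset_piece {z : ℂ} (hz : z ∈ S.K) (n : ℕ) : S.Kcomp z ⊆ S.piece n z := by
  rw [S.Kcomp_eq_iInter_piece hz]
  exact Set.iInter_subset _ n

lemma mem_Kcomp {z : ℂ} (hz : z ∈ S.K) : z ∈ S.Kcomp z := mem_connectedComponentIn hz

lemma iInter_closure_piece {z : ℂ} (hz : z ∈ S.K) :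
    (⋂ n, closure (S.piece n z)) = S.Kcomp z := by
  apply Set.Subset.antisymm
  · intro x hx
    rw [S.Kcomp_eq_iInter_piece hz]
    refine Set.mem_iInter.2 fun n => ?_
    exact S.closure_piece_subset (S.K_subset_preV (n+1) hz) (Set.mem_iInter.1 hx (n+1))
  · intro x hx
    exact Set.mem_iInter.2 fun n =>
      subset_closure (S.Kcomp_subset_piece hz n hx)

lemma Kcomp_compact {z : ℂ} (hz : z ∈ S.K) : IsCompact (S.Kcomp z) := by
  rw [← S.iInter_closure_piece hz]
  refine ((S.closure_piece_compact 0 z).of_isClosed_subset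
    (isClosed_iInter fun n => isClosed_closure) ?_)
  exact Set.iInter_subset _ 1

lemma cont_iter : ∀ r, ContinuousOn (S.f^[r]) (S.preV r) := by
  intro r
  induction r with
  | zero => simpa using continuousOn_id
  | succ m ih =>
      rw [Function.iterate_succ]
      refine ContinuousOn.comp ih (S.fc.mono (S.preV_succ_subset_U m)) ?_
      rintro x ⟨hxU, hxf⟩
      exact hxf

lemma preV_subset_U {n : ℕ} (hn : 1 ≤ n) : S.preV n ⊆ S.U := by
  obtain ⟨m, rfl⟩ := Nat.exists_eq_add_of_le hn
  exact fun x hx => (S.preV_antitone (Nat.le_add_right 1 m) hx).1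

lemma not_eventually_const {z : ℂ} (hz : z ∈ S.U) :
    ¬ ∀ᶠ w in 𝓝 z, S.f w = S.f z := by
  intro hev
  set C := connectedComponentIn S.U z with hC
  have hCopen : IsOpen C := S.hU_open.connectedComponentIn
  have hCconn : IsPreconnected C := isPreconnected_connectedComponentIn
  have hCz : z ∈ C := mem_connectedComponentIn hz
  have hCU : C ⊆ S.U := connectedComponentIn_subset _ _
  have hconst : Set.EqOn S.f (fun _ => S.f z) C :=
    (S.fan.mono hCU).eqOn_of_preconnected_of_eventuallyEq analyticOnNhd_const hCconn hCz hev
  have hfzV : S.f z ∈ S.V := S.hf_maps hz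
  have hT : IsCompact (S.U ∩ S.f ⁻¹' {S.f z}) :=
    S.hf_proper _ (Set.singleton_subset_iff.2 hfzV) isCompact_singleton
  have hCT : C ⊆ S.U ∩ S.f ⁻¹' {S.f z} := fun x hx => ⟨hCU hx, hconst hx⟩
  have hclC : closure C ⊆ C := by
    have h1 : closure C ⊆ S.U ∩ S.f ⁻¹' {S.f z} := closure_minimal hCT hT.isClosed
    have h2 : IsPreconnected (closure C) := hCconn.closure
    exact h2.subset_connectedComponentIn (subset_closure hCz)
      (h1.trans Set.inter_subset_left)
  have hclopen : IsClopen C := ⟨isClosed_of_closure_subset hclC, hCopen⟩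
  have huniv : C = Set.univ := hclopen.eq_univ ⟨z, hCz⟩
  have hbd : Bornology.IsBounded C := (S.V_bounded.subset S.hUsubV).subset hCU
  rw [huniv] at hbd
  obtain ⟨R, hR⟩ := hbd.subset_closedBall 0
  have hmem := hR (Set.mem_univ ((|R| + 1 : ℝ) : ℂ))
  rw [Metric.mem_closedBall, dist_zero_right] at hmem
  have hnorm : ‖((|R| + 1 : ℝ) : ℂ)‖ = |R| + 1 := by
    rw [Complex.norm_real, Real.norm_eq_abs, abs_of_nonneg (by positivity)]
  rw [hnorm] at hmem
  have := le_abs_self R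
  linarith

lemma image_piece {n : ℕ} (hn : 1 ≤ n) {x : ℂ} (hx : x ∈ S.preV (n+1)) :
    S.f '' S.piece (n+1) x = S.piece n (S.f x) := by
  have hfx : S.f x ∈ S.preV n := hx.2
  set Q := S.piece (n+1) x with hQ
  set P := S.piece n (S.f x) with hP
  have hQsub : Q ⊆ S.preV (n+1) := S.piece_subset _ _
  have hQU : Q ⊆ S.U := hQsub.trans (S.preV_succ_subset_U n)
  have hQopen : IsOpen Q := S.piece_open _ _
  have hxQ : x ∈ Q := S.mem_piece hx
  have hsub : S.f '' Q ⊆ P := by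
    have hconn : IsPreconnected (S.f '' Q) :=
      (S.piece_preconnected _ _).image _ (S.fc.mono hQU)
    have himgV : S.f '' Q ⊆ S.preV n := by
      rintro y ⟨w, hw, rfl⟩
      exact (hQsub hw).2
    exact hconn.subset_connectedComponentIn ⟨x, hxQ, rfl⟩ himgV
  have hopen : IsOpen (S.f '' Q) := by
    rw [isOpen_iff_mem_nhds]
    rintro y ⟨w, hw, rfl⟩
    have haw : AnalyticAt ℂ S.f w := S.fan w (hQU hw)
    rcases haw.eventually_constant_or_nhds_le_map_nhds with hconst | hmap
    · exact absurd hconst (S.not_eventually_const (hQU hw))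
    · exact hmap (Filter.image_mem_map (hQopen.mem_nhds hw))
  have hkey : P ∩ closure (S.f '' Q) ⊆ S.f '' Q := by
    rintro y ⟨hyP, hycl⟩
    have hclQ : closure Q ⊆ S.preV n :=
      (closure_mono hQsub).trans (S.closure_preV_spec n).2
    have hclQc : IsCompact (closure Q) := S.closure_piece_compact n x
    have hcont : ContinuousOn S.f (closure Q) :=
      S.fc.mono (hclQ.trans (S.preV_subset_U hn))
    have himgc : IsCompact (S.f '' closure Q) := hclQc.image_of_continuousOn hcont
    have hy2 : y ∈ S.f '' closure Q :=
      closure_minimal (Set.image_mono subset_closure) himgc.isClosed hycl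
    obtain ⟨w, hw, rfl⟩ := hy2
    have hwU : w ∈ S.U := S.preV_subset_U hn (hclQ hw)
    have hwpre : w ∈ S.preV (n+1) := ⟨hwU, S.piece_subset n (S.f x) hyP⟩
    exact ⟨w, auxMemConnCompOfClosure (S.preV_open (n+1)) hw hwpre, rfl⟩
  refine Set.Subset.antisymm hsub ?_
  have hPconn : IsPreconnected P := S.piece_preconnected _ _
  have hcover : P ⊆ (S.f '' Q) ∪ (closure (S.f '' Q))ᶜ := by
    intro y hy
    by_cases hyc : y ∈ closure (S.f '' Q)
    · exact Or.inl (hkey ⟨hy, hyc⟩)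
    · exact Or.inr hyc
  have hne1 : (P ∩ (S.f '' Q)).Nonempty := ⟨S.f x, hsub ⟨x, hxQ, rfl⟩, ⟨x, hxQ, rfl⟩⟩
  by_cases hne2 : (P ∩ (closure (S.f '' Q))ᶜ).Nonempty
  · obtain ⟨y, hy⟩ := hPconn _ _ hopen isClosed_closure.isOpen_compl hcover hne1 hne2
    exact absurd (subset_closure hy.2.1) hy.2.2
  · rw [Set.not_nonempty_iff_eq_empty] at hne2
    intro y hy
    have hyc : y ∈ closure (S.f '' Q) := by
      by_contra hyc
      exact Set.eq_empty_iff_forall_notMem.1 hne2 y ⟨hy, hyc⟩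
    exact hkey ⟨hy, hyc⟩

lemma image_piece_iter {n : ℕ} (hn : 1 ≤ n) (r : ℕ) :
    ∀ {x : ℂ}, x ∈ S.preV (n+r) →
      S.f^[r] '' S.piece (n+r) x = S.piece n (S.f^[r] x) := by
  induction r with
  | zero => intro x _; simp [Setup.piece]
  | succ m ih =>
      intro x hx
      have hx' : x ∈ S.preV ((n+m)+1) := hx
      have h1 : S.f '' S.piece ((n+m)+1) x = S.piece (n+m) (S.f x) :=
        S.image_piece (by omega) hx'
      have h2 : S.f x ∈ S.preV (n+m) := hx'.2
      rw [show n+(m+1) = n+m+1 from rfl]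
      calc S.f^[m+1] '' S.piece (n+m+1) x
          = S.f^[m] '' (S.f '' S.piece ((n+m)+1) x) := by
            rw [Function.iterate_succ, Set.image_comp]
        _ = S.f^[m] '' S.piece (n+m) (S.f x) := by rw [h1]
        _ = S.piece n (S.f^[m] (S.f x)) := ih h2
        _ = S.piece n (S.f^[m+1] x) := by rw [Function.iterate_succ_apply]

lemma Kcomp_def (x : ℂ) : S.Kcomp x = connectedComponentIn S.K x := rfl

lemma Kcomp_image {z : ℂ} (hz : z ∈ S.K) (r : ℕ) :
    S.f^[r] '' S.Kcomp z = S.Kcomp (S.f^[r] z) := by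
  have hzn : ∀ n, z ∈ S.preV n := fun n => S.K_subset_preV n hz
  have hzK' : S.f^[r] z ∈ S.K := S.K_fwd hz r
  set E := fun n => closure (S.piece (n + (r+2)) z) with hE
  have hd : ∀ n, E (n+1) ⊆ E n := by
    intro n
    have he : (n+1) + (r+2) = (n + (r+2)) + 1 := by omega
    rw [hE]
    simp only []
    rw [he]
    exact (S.closure_piece_subset (hzn _)).trans subset_closure
  have hcomp : ∀ n, IsCompact (E n) := by
    intro n
    have he : n + (r+2) = (n+r+1) + 1 := by omega
    rw [hE]; simp only []; rw [he]
    exact S.closure_piece_compact _ z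
  have hEpre : ∀ n, E n ⊆ S.preV (n+r+1) := by
    intro n
    have he : n + (r+2) = (n+r+1) + 1 := by omega
    rw [hE]; simp only []; rw [he]
    exact (closure_mono (S.piece_subset _ _)).trans (S.closure_preV_spec _).2
  have hcont : ContinuousOn (S.f^[r]) (E 0) :=
    (S.cont_iter r).mono ((hEpre 0).trans (S.preV_antitone (by omega)))
  have hiE : (⋂ n, E n) = S.Kcomp z := by
    rw [← S.iInter_closure_piece hz]
    apply Set.Subset.antisymm
    · intro x hx
      refine Set.mem_iInter.2 fun n => ?_
      have h1 : E n ⊆ closure (S.piece n z) :=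
        closure_mono (S.piece_mono (by omega) z)
      exact h1 (Set.mem_iInter.1 hx n)
    · intro x hx
      exact Set.mem_iInter.2 fun n => Set.mem_iInter.1 hx (n + (r+2))
  have himg : S.f^[r] '' S.Kcomp z = ⋂ n, S.f^[r] '' E n := by
    rw [← hiE]
    exact auxImageIInter hd hcomp hcont
  have hsand : ∀ n, S.piece (n+2) (S.f^[r] z) ⊆ S.f^[r] '' E n ∧
      S.f^[r] '' E n ⊆ closure (S.piece (n+2) (S.f^[r] z)) := by
    intro n
    have he : n + (r+2) = (n+2) + r := by omega
    have hximg : S.f^[r] '' S.piece ((n+2)+r) z = S.piece (n+2) (S.f^[r] z) :=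
      S.image_piece_iter (by omega) r (hzn _)
    constructor
    · rw [← hximg]
      apply Set.image_mono
      rw [hE]; simp only []; rw [he]
      exact subset_closure
    · have hcont2 : ContinuousOn (S.f^[r]) (closure (S.piece (n + (r+2)) z)) :=
        (S.cont_iter r).mono ((hEpre n).trans (S.preV_antitone (by omega)))
      have := hcont2.image_closure
      rw [hE]; simp only []
      refine this.trans (closure_mono ?_)
      rw [he] at *
      rw [hximg]
  apply Set.Subset.antisymm
  · rw [himg]
    intro y hy
    rw [← S.iInter_closure_piece hzK']
    refine Set.mem_iInter.2 fun n => ?_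
    have h1 := (hsand n).2 (Set.mem_iInter.1 hy n)
    exact closure_mono (S.piece_mono (by omega) _) h1
  · rw [himg]
    intro y hy
    refine Set.mem_iInter.2 fun n => ?_
    exact (hsand n).1 (S.Kcomp_subset_piece hzK' (n+2) hy)

lemma image_iterate_add (A : Set ℂ) (m k : ℕ) :
    S.f^[m+k] '' A = S.f^[m] '' (S.f^[k] '' A) := by
  rw [Function.iterate_add, Set.image_comp]

lemma iter_mul_p {c : ℂ} {p : ℕ} (hper : S.f^[p] '' S.Kcomp c = S.Kcomp c) :
    ∀ a, S.f^[p*a] '' S.Kcomp c = S.Kcomp c := by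
  intro a
  induction a with
  | zero => simp
  | succ b ih =>
      have he : p * (b+1) = (p*b) + p := by ring
      rw [he, S.image_iterate_add, hper, ih]

lemma iter_mod {c : ℂ} {p : ℕ} (hper : S.f^[p] '' S.Kcomp c = S.Kcomp c)
    (j : ℕ) : S.f^[j] '' S.Kcomp c = S.f^[j % p] '' S.Kcomp c := by
  conv_lhs => rw [show j = j % p + p * (j / p) from (Nat.mod_add_div j p).symm]
  rw [S.image_iterate_add, S.iter_mul_p hper]

lemma part1core {c : ℂ} (hcK : c ∈ S.K) {p : ℕ} (hp : 1 ≤ p)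
    (hper : S.f^[p] '' S.Kcomp c = S.Kcomp c)
    {c' : ℂ} (hc'K : c' ∈ S.K) (hacc : S.Acc c c') :
    ∃ r, r < p ∧ S.Kcomp c' = S.f^[r] '' S.Kcomp c := by
  choose j hj1 hj2 using hacc
  have hpig : ∃ r, r < p ∧ {n : ℕ | j n % p = r}.Infinite := by
    by_contra h
    push_neg at h
    have hcov : (Set.univ : Set ℕ) ⊆ ⋃ r ∈ Set.Iio p, {n : ℕ | j n % p = r} := by
      intro n _
      exact Set.mem_biUnion (Set.mem_Iio.2 (Nat.mod_lt _ (by omega))) rfl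
    have hfin : (⋃ r ∈ Set.Iio p, {n : ℕ | j n % p = r}).Finite :=
      (Set.finite_Iio p).biUnion fun r hr => (h r (Set.mem_Iio.1 hr))
    exact Set.infinite_univ (hfin.subset hcov)
  obtain ⟨r, hrp, hinf⟩ := hpig
  set W := S.f^[r] '' S.Kcomp c with hW
  have hWcomp : IsCompact W := (S.Kcomp_compact hcK).image_of_continuousOn
    ((S.cont_iter r).mono ((connectedComponentIn_subset _ _).trans (S.K_subset_preV r)))
  set E := fun n => W ∩ closure (S.piece n c') with hE
  have hd : ∀ n, E (n+1) ⊆ E n := fun n =>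
    Set.inter_subset_inter_right _ (closure_mono (S.piece_mono (Nat.le_succ n) c'))
  have hcomp : ∀ n, IsCompact (E n) := fun n => hWcomp.inter_right isClosed_closure
  have hne : ∀ n, (E n).Nonempty := by
    intro n
    obtain ⟨m, hm1, hm2⟩ := hinf.exists_gt n
    refine ⟨S.f^[j m] c, ?_, ?_⟩
    · have h1 : S.f^[j m] c ∈ S.f^[j m] '' S.Kcomp c :=
        Set.mem_image_of_mem _ (S.mem_Kcomp hcK)
      rw [S.iter_mod hper, hm1] at h1
      exact h1
    · exact subset_closure (S.piece_mono (le_of_lt hm2) c' (hj2 m))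
  obtain ⟨z, hz⟩ := IsCompact.nonempty_iInter_of_sequence_nonempty_isCompact_isClosed
    E hd hne (hcomp 0) (fun n => (hcomp n).isClosed)
  simp only [Set.mem_iInter, hE, Set.mem_inter_iff] at hz
  have hzW : z ∈ W := (hz 0).1
  have hzK2 : z ∈ S.Kcomp c' := by
    rw [← S.iInter_closure_piece hc'K]
    exact Set.mem_iInter.2 fun n => (hz n).2
  have hWK : W = S.Kcomp (S.f^[r] c) := S.Kcomp_image hcK r
  refine ⟨r, hrp, ?_⟩
  have h1 : connectedComponentIn S.K c' = connectedComponentIn S.K z :=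
    connectedComponentIn_eq hzK2
  have h2 : connectedComponentIn S.K (S.f^[r] c) = connectedComponentIn S.K z :=
    connectedComponentIn_eq (by rw [← S.Kcomp_def, ← hWK]; exact hzW)
  rw [S.Kcomp_def, h1, ← h2, ← S.Kcomp_def, ← hWK]

lemma crit_finite : S.Crit.Finite := by
  by_contra hinf
  have hinf' : S.Crit.Infinite := hinf
  have hT : IsCompact (S.U ∩ S.f ⁻¹' closure S.U) :=
    S.hf_proper _ S.hUV S.closureU_compact
  have hCT : S.Crit ⊆ S.U ∩ S.f ⁻¹' closure S.U := by
    intro c hc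
    refine ⟨hc.1, subset_closure ?_⟩
    have h1 := S.hf_crit c hc.1 hc.2 1
    rwa [Function.iterate_one] at h1
  have : Infinite S.Crit := Set.infinite_coe_iff.2 hinf'
  set u : ℕ → ℂ := fun n => (Infinite.natEmbedding S.Crit n : ℂ) with hu
  have huC : ∀ n, u n ∈ S.Crit := fun n => (Infinite.natEmbedding S.Crit n).2
  have huinj : Function.Injective u := fun a b hab =>
    (Infinite.natEmbedding S.Crit).injective (Subtype.ext hab)
  obtain ⟨z, hzT, φ, hφ, htend⟩ := hT.tendsto_subseq (fun n => hCT (huC n))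
  have hzU : z ∈ S.U := hzT.1
  have hder : AnalyticAt ℂ (deriv S.f) z := S.fan.deriv z hzU
  rcases hder.eventually_eq_zero_or_eventually_ne_zero with hzero | hne
  · set C := connectedComponentIn S.U z with hC
    have hCopen : IsOpen C := S.hU_open.connectedComponentIn
    have hCU : C ⊆ S.U := connectedComponentIn_subset _ _
    have hCz : z ∈ C := mem_connectedComponentIn hzU
    have hEq : Set.EqOn (deriv S.f) 0 C :=
      (S.fan.deriv.mono hCU).eqOn_zero_of_preconnected_of_eventuallyEq_zero
        isPreconnected_connectedComponentIn hCz hzero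
    obtain ⟨ε, hε, hball⟩ := Metric.isOpen_iff.1 hCopen z hCz
    have hev : ∀ᶠ w in 𝓝 z, S.f w = S.f z := by
      rw [Filter.eventually_iff_exists_mem]
      refine ⟨Metric.ball z ε, Metric.ball_mem_nhds z hε, fun w hw => ?_⟩
      have hconv : Convex ℝ (Metric.ball z ε) := convex_ball z ε
      refine hconv.is_const_of_fderivWithin_eq_zero
        (S.hf_holo.mono (hball.trans hCU)) ?_ hw (Metric.mem_ball_self hε)
      intro y hy
      rw [fderivWithin_of_isOpen Metric.isOpen_ball hy]
      have hdy : DifferentiableAt ℂ S.f y := (S.fan y (hCU (hball hy))).differentiableAt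
      have hzero' : deriv S.f y = 0 := hEq (hball hy)
      have h2 := hdy.hasDerivAt.hasFDerivAt
      rw [hzero'] at h2
      rw [h2.fderiv]
      ext w
      simp
    exact S.not_eventually_const hzU hev
  · have hzero' : ∀ n, deriv S.f (u (φ n)) = 0 := fun n => (huC (φ n)).2
    have hevne : ∀ᶠ n in Filter.atTop, u (φ n) ≠ z := by
      rcases em (∃ n0, u (φ n0) = z) with ⟨n0, hn0⟩ | hex
      · filter_upwards [Filter.eventually_gt_atTop n0] with n hn heq
        have h3 : φ n = φ n0 := huinj (heq.trans hn0.symm)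
        exact absurd (hφ.injective h3) (Nat.ne_of_gt hn)
      · push_neg at hex
        exact Filter.Eventually.of_forall hex
    have htend' : Filter.Tendsto (fun n => u (φ n)) Filter.atTop (𝓝[≠] z) := by
      rw [tendsto_nhdsWithin_iff]
      exact ⟨htend, hevne.mono fun n hn => hn⟩
    obtain ⟨n, hn⟩ := (htend'.eventually hne).exists
    exact hn (hzero' n)

end Setup


/-- Let `c` be a critical point whose component `K_f(c)` is
periodic of period `p`. Then (1) for every critical `c' ∈ Forw(c)` and every
`i ≥ 0`, `f^i(K_f(c'))` belongs to the cycle `{K_f(c), …, f^{p-1}(K_f(c))}`;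
(2) every critical point of `Forw(c)` lies in `[c]`; (3) `c → c` and `c` is
persistently recurrent. -/
theorem stmt_15 (S : Setup) (h1 : S.OneCritPerComp) (h2 : S.StarStar)
    (c : ℂ) (hc : c ∈ S.Crit) (p : ℕ) (hp : 1 ≤ p)
    (hper : S.f^[p] '' S.Kcomp c = S.Kcomp c)
    (hmin : ∀ q, 1 ≤ q → q < p → S.f^[q] '' S.Kcomp c ≠ S.Kcomp c) :
    (∀ c' ∈ S.Crit, c' ∈ S.Forw c → ∀ i : ℕ,
      ∃ j < p, S.f^[i] '' S.Kcomp c' = S.f^[j] '' S.Kcomp c) ∧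
    (∀ c' ∈ S.Crit, c' ∈ S.Forw c → c' ∈ S.cls c) ∧
    (S.Acc c c ∧ S.PersistentlyRecurrent c) := by
  have hcK : c ∈ S.K := S.crit_mem_K hc
  have core : ∀ c'', c'' ∈ S.K → S.Acc c c'' →
      ∃ r, r < p ∧ S.Kcomp c'' = S.f^[r] '' S.Kcomp c :=
    fun c'' hk ha => S.part1core hcK hp hper hk ha
  have hAcc_self : S.Acc c c := by
    intro n
    refine ⟨p, hp, ?_⟩
    have hmem : S.f^[p] c ∈ S.Kcomp c := by
      rw [← hper]
      exact Set.mem_image_of_mem _ (S.mem_Kcomp hcK)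
    exact S.Kcomp_subset_piece hcK n hmem
  have back : ∀ c'', c'' ∈ S.K → S.Acc c c'' → S.Acc c'' c := by
    intro c'' hk ha
    obtain ⟨r, hrp, hK⟩ := core c'' hk ha
    intro n
    refine ⟨2*p - r, by omega, ?_⟩
    have hm : S.f^[2*p - r] c'' ∈ S.f^[2*p - r] '' S.Kcomp c'' :=
      Set.mem_image_of_mem _ (S.mem_Kcomp hk)
    rw [hK, ← S.image_iterate_add, show (2*p - r) + r = p + p from by omega,
      S.image_iterate_add, hper, hper] at hm
    exact S.Kcomp_subset_piece hcK n hm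
  refine ⟨?_, ?_, hAcc_self, ?_⟩
  · -- part 1
    intro c' _ hforw i
    obtain ⟨r, hrp, hK⟩ := core c' hforw.1 hforw.2
    refine ⟨(i + r) % p, Nat.mod_lt _ (by omega), ?_⟩
    rw [hK, ← S.image_iterate_add]
    exact S.iter_mod hper (i+r)
  · -- part 2
    intro c' hcrit hforw
    exact ⟨hcrit, Or.inr ⟨hforw.2, back c' hforw.1 hforw.2⟩⟩
  · -- part 3: persistent recurrence
    intro n c'0 _
    have hsub : {Q : Set ℂ | ∃ c1 ∈ S.cls c, ∃ k : ℕ, S.IsChild c1 k n c'0 ∧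
        Q = S.piece (n+k) c1} ⊆
        (fun q : ℂ × ℕ => S.piece (n + q.2) q.1) '' ((S.cls c) ×ˢ (Set.Iic p)) := by
      rintro Q ⟨c1, hc1, k, hchild, rfl⟩
      refine ⟨(c1, k), ⟨hc1, Set.mem_Iic.2 ?_⟩, rfl⟩
      by_contra hk
      push_neg at hk
      have hc1crit : c1 ∈ S.Crit := hc1.1
      have hc1K : c1 ∈ S.K := S.crit_mem_K hc1crit
      obtain ⟨r1, hr1p, hKc1⟩ : ∃ r1, r1 < p ∧ S.Kcomp c1 = S.f^[r1] '' S.Kcomp c := by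
        rcases hc1.2 with heq | ⟨hacc, -⟩
        · refine ⟨0, by omega, ?_⟩
          rw [← heq]
          simp
        · exact core c1 hc1K hacc
      obtain ⟨hk1, himgk, hinj, himg2⟩ := hchild
      set t := (p - (r1+1) % p) % p with ht
      have htp : t < p := Nat.mod_lt _ (by omega)
      have htmod : (r1 + 1 + t) % p = 0 := by
        have htlt : t < p := htp
        rw [Nat.add_mod (r1+1) t p, Nat.mod_eq_of_lt htlt]
        rcases Nat.eq_zero_or_pos ((r1+1) % p) with h0 | hpos
        · have htt : t = 0 := by
            rw [ht, h0, Nat.sub_zero, Nat.mod_self]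
          rw [h0, htt]
          simp
        · have htt : t = p - (r1+1) % p := by
            rw [ht]
            exact Nat.mod_eq_of_lt (by omega)
          rw [htt, show (r1+1) % p + (p - (r1+1) % p) = p from by
            have : (r1+1) % p < p := Nat.mod_lt _ (by omega)
            omega, Nat.mod_self]
      set m := n + k - 1 - t with hm
      have hm1 : 1 ≤ m := by omega
      have hmt : n + k - 1 = m + t := by omega
      have hfc1K : S.f c1 ∈ S.K := by
        have hh := S.K_fwd hc1K 1
        rwa [Function.iterate_one] at hh
      have hfc1pre : S.f c1 ∈ S.preV (m + t) := S.K_subset_preV _ hfc1K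
      have hsurj : S.f^[t] '' S.piece (m + t) (S.f c1) = S.piece m (S.f^[t] (S.f c1)) :=
        S.image_piece_iter hm1 t hfc1pre
      set y := S.f^[t] (S.f c1) with hy
      have hyit : y = S.f^[t+1] c1 := by
        rw [hy, Function.iterate_succ_apply]
      have hyK : y ∈ S.K := by
        rw [hyit]
        exact S.K_fwd hc1K (t+1)
      have hKy : S.Kcomp y = S.Kcomp c := by
        rw [hyit, ← S.Kcomp_image hc1K (t+1), hKc1, ← S.image_iterate_add,
          S.iter_mod hper,
          show (t+1+r1) % p = 0 from by rw [show t+1+r1 = r1+1+t from by omega]; exact htmod]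
        simp
      have hcB : c ∈ S.piece m y := by
        have hmem : c ∈ S.Kcomp y := by
          rw [hKy]
          exact S.mem_Kcomp hcK
        exact S.Kcomp_subset_piece hyK m hmem
      have hinjB : Set.InjOn S.f (S.piece m y) := by
        intro x1 hx1 x2 hx2 hfx
        rw [← hsurj] at hx1 hx2
        obtain ⟨w1, hw1, rfl⟩ := hx1
        obtain ⟨w2, hw2, rfl⟩ := hx2
        have he1 : S.f^[t+1] w1 = S.f^[t+1] w2 := by
          rw [Function.iterate_succ_apply', Function.iterate_succ_apply']
          exact hfx
        have he2 : S.f^[k-1] w1 = S.f^[k-1] w2 := by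
          rw [show k - 1 = (k - 2 - t) + (t+1) from by omega,
            Function.iterate_add_apply S.f (k-2-t) (t+1) w1,
            Function.iterate_add_apply S.f (k-2-t) (t+1) w2, he1]
        have hw1' : w1 ∈ S.piece (n+k-1) (S.f c1) := by
          rw [hmt]; exact hw1
        have hw2' : w2 ∈ S.piece (n+k-1) (S.f c1) := by
          rw [hmt]; exact hw2
        have hw12 : w1 = w2 := hinj hw1' hw2' he2
        rw [hw12]
      exact auxCritNotInjOn ((S.piece_open m y).mem_nhds hcB)
        (S.fan c hc.1) (S.not_eventually_const hc.1) hc.2 hinjB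
    have hfin : ((S.cls c) ×ˢ (Set.Iic p)).Finite :=
      (S.crit_finite.subset (fun x hx => hx.1)).prod (Set.finite_Iic p)
    exact (hfin.image _).subset hsub
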